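/- Let q_s, q_t > 0 and consider the system: χ² − (βγ + δ + δ⁻¹)χ + 1 = 0 together with (χ − δ⁻¹)/(β α_s) − (χ − δ)/(γ α_t) = μ − 1/(1+q_s) + 1/(1+q_t), where α_s = √q_s + 1/√q_s, α_t = √q_t + 1/√q_t, α_st = √(q_s q_t) − 1/√(q_s q_t), δ = α_s/α_t, β = α_st/α_s − α_t μ, γ = α_st/α_t + α_s μ, and β, γ ≠ 0. Then the only solutions (χ, μ) are (√(q_s q_t), 0), (1/√(q_s q_t), 0), (−√(q_s/q_t), 1), and (−√(q_t/q_s), −1). -/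

import Mathlib

set_option maxHeartbeats 4000000 in
/-- The only simultaneous real solutions (χ, μ) of the characteristic equation
χ² − (βγ + δ + δ⁻¹)χ + 1 = 0 and the initial-condition equation
(χ − δ⁻¹)/(βα_s) − (χ − δ)/(γα_t) = μ − 1/(1+q_s) + 1/(1+q_t),
with β, γ ≠ 0, are (√(q_sq_t), 0), (1/√(q_sq_t), 0), (−√(q_s/q_t), 1)
and (−√(q_t/q_s), −1). -/
theorem solutions_of_system (qs qt : ℝ) (hqs : 0 < qs) (hqt : 0 < qt)
    (χ μ αs αt αst δ β γ : ℝ)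
    (hαs : αs = Real.sqrt qs + 1 / Real.sqrt qs)
    (hαt : αt = Real.sqrt qt + 1 / Real.sqrt qt)
    (hαst : αst = Real.sqrt (qs * qt) - 1 / Real.sqrt (qs * qt))
    (hδ : δ = αs / αt)
    (hβ : β = αst / αs - αt * μ)
    (hγ : γ = αst / αt + αs * μ)
    (hβ0 : β ≠ 0) (hγ0 : γ ≠ 0)
    (heq1 : χ ^ 2 - (β * γ + δ + δ⁻¹) * χ + 1 = 0)
    (heq2 : (χ - δ⁻¹) / (β * αs) - (χ - δ) / (γ * αt)
              = μ - 1 / (1 + qs) + 1 / (1 + qt)) :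
    (χ = Real.sqrt (qs * qt) ∧ μ = 0) ∨
    (χ = 1 / Real.sqrt (qs * qt) ∧ μ = 0) ∨
    (χ = -(Real.sqrt qs / Real.sqrt qt) ∧ μ = 1) ∨
    (χ = -(Real.sqrt qt / Real.sqrt qs) ∧ μ = -1) := by
  have hsqst : Real.sqrt (qs * qt) = Real.sqrt qs * Real.sqrt qt := Real.sqrt_mul hqs.le qt
  rw [hsqst] at hαst ⊢
  set s := Real.sqrt qs with hsdef
  set t := Real.sqrt qt with htdef
  have hs0 : 0 < s := Real.sqrt_pos.mpr hqs
  have ht0 : 0 < t := Real.sqrt_pos.mpr hqt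
  have hqs2 : qs = s ^ 2 := (Real.sq_sqrt hqs.le).symm
  have hqt2 : qt = t ^ 2 := (Real.sq_sqrt hqt.le).symm
  rw [hqs2, hqt2] at heq2
  subst hαs hαt hαst hδ hβ hγ
  have hs' : s ≠ 0 := hs0.ne'
  have ht' : t ≠ 0 := ht0.ne'
  have hs1 : s ^ 2 + 1 ≠ 0 := by positivity
  have ht1 : t ^ 2 + 1 ≠ 0 := by positivity
  have hs1' : (1 : ℝ) + s ^ 2 ≠ 0 := by positivity
  have ht1' : (1 : ℝ) + t ^ 2 ≠ 0 := by positivity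
  have has : s + 1 / s ≠ 0 := by positivity
  have hat : t + 1 / t ≠ 0 := by positivity
  have hbn : s ^ 2 * t ^ 2 - 1 - (s ^ 2 + 1) * (t ^ 2 + 1) * μ ≠ 0 := by
    intro h
    apply hβ0
    field_simp
    linear_combination h
  have hgn : s ^ 2 * t ^ 2 - 1 + (s ^ 2 + 1) * (t ^ 2 + 1) * μ ≠ 0 := by
    intro h
    apply hγ0
    field_simp
    linear_combination h
  have H1 : s * t * (s ^ 2 + 1) * (t ^ 2 + 1) * (χ ^ 2 + 1)
      - ((s ^ 2 * t ^ 2 - 1) ^ 2 - (s ^ 2 + 1) ^ 2 * (t ^ 2 + 1) ^ 2 * μ ^ 2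
          + t ^ 2 * (s ^ 2 + 1) ^ 2 + s ^ 2 * (t ^ 2 + 1) ^ 2) * χ = 0 := by
    linear_combination (norm := (field_simp; ring)) (s * t * (s ^ 2 + 1) * (t ^ 2 + 1)) * heq1
  have e1 : ((s + 1 / s) / (t + 1 / t))⁻¹ = s * (t ^ 2 + 1) / (t * (s ^ 2 + 1)) := by
    rw [inv_div]; rw [div_eq_div_iff (by positivity) (by positivity)]; field_simp
  have e2 : (s + 1 / s) / (t + 1 / t) = t * (s ^ 2 + 1) / (s * (t ^ 2 + 1)) := by
    rw [div_eq_div_iff (by positivity) (by positivity)]; field_simp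
  have e3 : ((s * t - 1 / (s * t)) / (s + 1 / s) - (t + 1 / t) * μ) * (s + 1 / s)
      = (s ^ 2 * t ^ 2 - 1 - (s ^ 2 + 1) * (t ^ 2 + 1) * μ) / (s * t) := by
    field_simp
  have e4 : ((s * t - 1 / (s * t)) / (t + 1 / t) + (s + 1 / s) * μ) * (t + 1 / t)
      = (s ^ 2 * t ^ 2 - 1 + (s ^ 2 + 1) * (t ^ 2 + 1) * μ) / (s * t) := by
    field_simp
  rw [e1, e2, e3, e4] at heq2
  have hst : s * t ≠ 0 := by positivity
  rw [div_div_eq_mul_div, div_div_eq_mul_div] at heq2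
  have htn : t * (s ^ 2 + 1) ≠ 0 := by positivity
  have hsn : s * (t ^ 2 + 1) ≠ 0 := by positivity
  have H2 : μ * (2 * s ^ 2 * t ^ 2 * (s ^ 2 + 1) ^ 2 * (t ^ 2 + 1) ^ 2 * χ
      + s * t * (μ ^ 2 * (s ^ 2 + 1) ^ 3 * (t ^ 2 + 1) ^ 3
      + μ * (s ^ 2 * (s ^ 2 + 1) ^ 2 - t ^ 2 * (t ^ 2 + 1) ^ 2
          + s ^ 2 * t ^ 2 * (s ^ 2 - t ^ 2) * (s ^ 2 * t ^ 2 + 2 * s ^ 2 + 2 * t ^ 2 + 3))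
      - (1 + s ^ 2 * t ^ 2) * (s ^ 2 + 1) ^ 2 * (t ^ 2 + 1) ^ 2)) = 0 := by
    linear_combination (norm := (generalize eB : s ^ 2 * t ^ 2 - 1 - (s ^ 2 + 1) * (t ^ 2 + 1) * μ = B at hbn ⊢; generalize eG : s ^ 2 * t ^ 2 - 1 + (s ^ 2 + 1) * (t ^ 2 + 1) * μ = G at hgn ⊢; field_simp; subst eB eG; ring))
      ((s ^ 2 * t ^ 2 - 1 - (s ^ 2 + 1) * (t ^ 2 + 1) * μ)
        * (s ^ 2 * t ^ 2 - 1 + (s ^ 2 + 1) * (t ^ 2 + 1) * μ)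
        * (s ^ 2 + 1) * (t ^ 2 + 1) * (s * t)) * heq2
  rcases eq_or_ne μ 0 with hμ | hμ
  · subst hμ
    have key : (s ^ 2 + 1) * ((t ^ 2 + 1) * ((χ - s * t) * (s * t * χ - 1))) = 0 := by
      linear_combination H1
    have h3 := ((mul_eq_zero.mp ((mul_eq_zero.mp key).resolve_left hs1)).resolve_left ht1)
    rcases mul_eq_zero.mp h3 with h4 | h4
    · exact Or.inl ⟨by linarith, rfl⟩
    · refine Or.inr (Or.inl ⟨?_, rfl⟩)
      field_simp
      linear_combination h4
  · have L0 : (s * t) * (2 * s * t * (s ^ 2 + 1) ^ 2 * (t ^ 2 + 1) ^ 2 * χ + (μ ^ 2 * (s ^ 2 + 1) ^ 3 * (t ^ 2 + 1) ^ 3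
      + μ * (s ^ 2 * (s ^ 2 + 1) ^ 2 - t ^ 2 * (t ^ 2 + 1) ^ 2
          + s ^ 2 * t ^ 2 * (s ^ 2 - t ^ 2) * (s ^ 2 * t ^ 2 + 2 * s ^ 2 + 2 * t ^ 2 + 3))
      - (1 + s ^ 2 * t ^ 2) * (s ^ 2 + 1) ^ 2 * (t ^ 2 + 1) ^ 2)) = 0 := by
      have h := (mul_eq_zero.mp H2).resolve_left hμ
      linear_combination h
    have L : 2 * s * t * (s ^ 2 + 1) ^ 2 * (t ^ 2 + 1) ^ 2 * χ + (μ ^ 2 * (s ^ 2 + 1) ^ 3 * (t ^ 2 + 1) ^ 3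
      + μ * (s ^ 2 * (s ^ 2 + 1) ^ 2 - t ^ 2 * (t ^ 2 + 1) ^ 2
          + s ^ 2 * t ^ 2 * (s ^ 2 - t ^ 2) * (s ^ 2 * t ^ 2 + 2 * s ^ 2 + 2 * t ^ 2 + 3))
      - (1 + s ^ 2 * t ^ 2) * (s ^ 2 + 1) ^ 2 * (t ^ 2 + 1) ^ 2) = 0 :=
      (mul_eq_zero.mp L0).resolve_left hst
    have key2 : ((μ - 1) * (μ + 1)) *
        ((s ^ 2 * t ^ 2 - 1 - (s ^ 2 + 1) * (t ^ 2 + 1) * μ) *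
          ((s ^ 2 * t ^ 2 - 1 + (s ^ 2 + 1) * (t ^ 2 + 1) * μ) *
            (((s ^ 2 + 1) * (t ^ 2 + 1)) ^ 5 * (s * t)))) = 0 := by
      linear_combination (2 * s * t * (s ^ 2 + 1) ^ 2 * (t ^ 2 + 1) ^ 2) ^ 2 * H1
        - (s * t * (s ^ 2 + 1) * (t ^ 2 + 1)
              * (2 * s * t * (s ^ 2 + 1) ^ 2 * (t ^ 2 + 1) ^ 2 * χ - (μ ^ 2 * (s ^ 2 + 1) ^ 3 * (t ^ 2 + 1) ^ 3
      + μ * (s ^ 2 * (s ^ 2 + 1) ^ 2 - t ^ 2 * (t ^ 2 + 1) ^ 2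
          + s ^ 2 * t ^ 2 * (s ^ 2 - t ^ 2) * (s ^ 2 * t ^ 2 + 2 * s ^ 2 + 2 * t ^ 2 + 3))
      - (1 + s ^ 2 * t ^ 2) * (s ^ 2 + 1) ^ 2 * (t ^ 2 + 1) ^ 2))
            - ((s ^ 2 * t ^ 2 - 1 - (s ^ 2 + 1) * (t ^ 2 + 1) * μ)
                * (s ^ 2 * t ^ 2 - 1 + (s ^ 2 + 1) * (t ^ 2 + 1) * μ)
                + t ^ 2 * (s ^ 2 + 1) ^ 2 + s ^ 2 * (t ^ 2 + 1) ^ 2)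
              * (2 * s * t * (s ^ 2 + 1) ^ 2 * (t ^ 2 + 1) ^ 2)) * L
    have hrest : (s ^ 2 * t ^ 2 - 1 - (s ^ 2 + 1) * (t ^ 2 + 1) * μ) *
          ((s ^ 2 * t ^ 2 - 1 + (s ^ 2 + 1) * (t ^ 2 + 1) * μ) *
            (((s ^ 2 + 1) * (t ^ 2 + 1)) ^ 5 * (s * t))) ≠ 0 :=
      mul_ne_zero hbn (mul_ne_zero hgn (mul_ne_zero (by positivity) hst))
    rcases mul_eq_zero.mp ((mul_eq_zero.mp key2).resolve_right hrest) with h4 | h4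
    · have hμ1 : μ = 1 := by linarith
      subst hμ1
      have h5 : (2 * s * t * (s ^ 2 + 1) ^ 2 * (t ^ 2 + 1) ^ 2) * (t * χ + s) = 0 := by
        linear_combination t * L
      have h6 : t * χ + s = 0 := (mul_eq_zero.mp h5).resolve_left (by positivity)
      refine Or.inr (Or.inr (Or.inl ⟨?_, rfl⟩))
      field_simp
      linarith
    · have hμ1 : μ = -1 := by linarith
      subst hμ1
      have h5 : (2 * s * t * (s ^ 2 + 1) ^ 2 * (t ^ 2 + 1) ^ 2) * (s * χ + t) = 0 := by
        linear_combination s * L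
      have h6 : s * χ + t = 0 := (mul_eq_zero.mp h5).resolve_left (by positivity)
      refine Or.inr (Or.inr (Or.inr ⟨?_, rfl⟩))
      field_simp
      linarith
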